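/- For every T ∈ (0,∞) and every q ∈ (0,∞) one has the uniform exponential moment bounds sup_{ε∈(0,ε₀)} sup_{0≤t≤T} 𝔼[e^{q|ζ^ε(t)|}] < ∞ and sup_{0≤t≤T} 𝔼[e^{q|β(t)|}] < ∞. -/

import Mathlib

open MeasureTheory ProbabilityTheory Real Set Filter

open scoped NNReal ENNReal

lemma pdf_shift (v : ℝ≥0) (hv : (0:ℝ) < (v:ℝ)) (c x : ℝ) :
    Real.exp (c*x) * gaussianPDFReal 0 v x
      = Real.exp (c^2*v/2) * gaussianPDFReal (c*v) v x := by
  have hvne : (v:ℝ) ≠ 0 := ne_of_gt hv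
  have hexp : c*x + (-(x - 0)^2 / (2*(v:ℝ))) = c^2*(v:ℝ)/2 + (-(x - c*(v:ℝ))^2/(2*(v:ℝ))) := by
    field_simp
    ring
  unfold gaussianPDFReal
  rw [mul_left_comm, ← Real.exp_add, mul_left_comm (Real.exp (c^2*(v:ℝ)/2)), ← Real.exp_add, hexp]

lemma jensen_exp {ν : Measure ℝ} [IsProbabilityMeasure ν] {f : ℝ → ℝ}
    (hf : Integrable f ν) (hef : Integrable (fun u => Real.exp (f u)) ν) :
    Real.exp (∫ u, f u ∂ν) ≤ ∫ u, Real.exp (f u) ∂ν := by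
  set m := ∫ u, f u ∂ν with hm
  have h1 : ∀ u, Real.exp m + Real.exp m * (f u - m) ≤ Real.exp (f u) := by
    intro u
    calc Real.exp m + Real.exp m * (f u - m) = Real.exp m * ((f u - m) + 1) := by ring
      _ ≤ Real.exp m * Real.exp (f u - m) :=
          mul_le_mul_of_nonneg_left (Real.add_one_le_exp _) (Real.exp_pos m).le
      _ = Real.exp (f u) := by rw [← Real.exp_add]; ring_nf
  have h2' : Integrable (fun u => Real.exp m * (f u - m)) ν := by
    simpa using (hf.sub (integrable_const m)).const_mul (Real.exp m)
  have h2 : Integrable (fun u => Real.exp m + Real.exp m * (f u - m)) ν :=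
    (integrable_const _).add h2'
  calc Real.exp m = ∫ u, (Real.exp m + Real.exp m * (f u - m)) ∂ν := by
        rw [integral_add (integrable_const _) h2', integral_const, integral_const_mul]
        have : ∫ u, (f u - m) ∂ν = 0 := by
          rw [integral_sub hf (integrable_const m), integral_const]; simp [← hm]
        simp [this]
    _ ≤ ∫ u, Real.exp (f u) ∂ν := integral_mono h2 hef (fun u => h1 u)

lemma gauss_exp_abs (v : ℝ≥0) {q : ℝ} (hq : 0 < q) :
    Integrable (fun x => Real.exp (q*|x|)) (gaussianReal 0 v) ∧
    ∫ x, Real.exp (q*|x|) ∂(gaussianReal 0 v) ≤ 2 * Real.exp (q^2*(v:ℝ)/2) := by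
  have hcont : Continuous fun x : ℝ => Real.exp (q*|x|) :=
    Real.continuous_exp.comp (continuous_const.mul continuous_abs)
  rcases eq_or_ne v 0 with hv | hv
  · subst hv
    rw [gaussianReal_zero_var]
    constructor
    · have hae : (fun x : ℝ => Real.exp (q*|x|)) =ᵐ[Measure.dirac (0:ℝ)]
          (fun _ : ℝ => Real.exp (q*|(0:ℝ)|)) := ae_eq_dirac _
      exact (integrable_const _).congr hae.symm
    · rw [integral_dirac]
      simp only [abs_zero, mul_zero, Real.exp_zero]
      nlinarith [Real.exp_pos (q^2*((0:ℝ≥0):ℝ)/2),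
        Real.one_le_exp (by positivity : (0:ℝ) ≤ q^2*((0:ℝ≥0):ℝ)/2)]
  · have hv' : (0:ℝ) < (v:ℝ) := by positivity
    set W : ℝ → ℝ≥0 := fun x => (gaussianPDFReal 0 v x).toNNReal with hW
    have hWmeas : Measurable W := (measurable_gaussianPDFReal 0 v).real_toNNReal
    have hrepr : gaussianReal 0 v = volume.withDensity (fun x => (W x : ℝ≥0∞)) := by
      rw [gaussianReal_of_var_ne_zero 0 hv]; rfl
    set B : ℝ → ℝ := fun x =>
      Real.exp (q^2*(v:ℝ)/2) * (gaussianPDFReal (q*v) v x + gaussianPDFReal (-q*v) v x) with hB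
    have hBint : Integrable B volume :=
      ((integrable_gaussianPDFReal _ _).add (integrable_gaussianPDFReal _ _)).const_mul _
    have hpt : ∀ x, gaussianPDFReal 0 v x * Real.exp (q*|x|) ≤ B x := by
      intro x
      have hle : Real.exp (q*|x|) ≤ Real.exp (q*x) + Real.exp (-q*x) := by
        rcases abs_choice x with h | h <;> rw [h]
        · linarith [Real.exp_pos (-q*x)]
        · have hqx : q * -x = -q * x := by ring
          rw [hqx]
          linarith [Real.exp_pos (q*x)]
      calc gaussianPDFReal 0 v x * Real.exp (q*|x|)
          ≤ gaussianPDFReal 0 v x * (Real.exp (q*x) + Real.exp (-q*x)) :=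
            mul_le_mul_of_nonneg_left hle (gaussianPDFReal_nonneg 0 v x)
        _ = Real.exp (q*x) * gaussianPDFReal 0 v x + Real.exp ((-q)*x) * gaussianPDFReal 0 v x := by
            ring_nf
        _ = B x := by
            rw [pdf_shift v hv' q x, pdf_shift v hv' (-q) x, hB]
            ring_nf
    have hmeas2 : AEStronglyMeasurable (fun x => gaussianPDFReal 0 v x * Real.exp (q*|x|)) volume :=
      ((measurable_gaussianPDFReal 0 v).mul hcont.measurable).aestronglyMeasurable
    have hInt2 : Integrable (fun x => gaussianPDFReal 0 v x * Real.exp (q*|x|)) volume := by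
      refine hBint.mono' hmeas2 (ae_of_all _ fun x => ?_)
      rw [Real.norm_eq_abs,
        abs_of_nonneg (mul_nonneg (gaussianPDFReal_nonneg 0 v x) (Real.exp_pos _).le)]
      exact hpt x
    have hfun : (fun x => W x • Real.exp (q*|x|))
        = fun x => gaussianPDFReal 0 v x * Real.exp (q*|x|) := by
      funext x
      rw [NNReal.smul_def, hW, Real.coe_toNNReal _ (gaussianPDFReal_nonneg 0 v x), smul_eq_mul]
    have hint_iff : Integrable (fun x => Real.exp (q*|x|)) (gaussianReal 0 v) := by
      rw [hrepr, integrable_withDensity_iff_integrable_smul hWmeas, hfun]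
      exact hInt2
    refine ⟨hint_iff, ?_⟩
    have heq : ∫ x, Real.exp (q*|x|) ∂(gaussianReal 0 v)
        = ∫ x, gaussianPDFReal 0 v x * Real.exp (q*|x|) := by
      rw [hrepr, integral_withDensity_eq_integral_smul hWmeas]
      exact integral_congr_ae (ae_of_all _ (fun x => congrFun hfun x))
    rw [heq]
    calc ∫ x, gaussianPDFReal 0 v x * Real.exp (q*|x|)
        ≤ ∫ x, B x := integral_mono hInt2 hBint hpt
      _ = 2 * Real.exp (q^2*(v:ℝ)/2) := by
          rw [hB]
          simp only [integral_const_mul]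
          rw [integral_add (integrable_gaussianPDFReal _ _) (integrable_gaussianPDFReal _ _),
            integral_gaussianPDFReal_eq_one _ hv, integral_gaussianPDFReal_eq_one _ hv]
          ring

lemma zeta_closed_form {ε : ℝ} (hε : 0 < ε) (m₀ : ℝ) {b : ℝ → ℝ} (hb : Continuous b) (t : ℝ) :
    ε⁻¹ * ∫ s in (0:ℝ)..t,
        (Real.exp (-(s / ε ^ 2)) * m₀ + ε⁻¹ * b s
          - (ε ^ 3)⁻¹ * ∫ u in (0:ℝ)..s, Real.exp (-((s - u) / ε ^ 2)) * b u)
      = ε * m₀ * (1 - Real.exp (-(t / ε ^ 2)))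
        + (ε ^ 2)⁻¹ * ∫ u in (0:ℝ)..t, Real.exp (-((t - u) / ε ^ 2)) * b u := by
  set c : ℝ := ε ^ 2 with hc
  have hc0 : 0 < c := by positivity
  set h : ℝ → ℝ := fun s => Real.exp (s / c) * b s with hh
  have hhcont : Continuous h := (Real.continuous_exp.comp (continuous_id.div_const c)).mul hb
  set g : ℝ → ℝ := fun s => ∫ u in (0:ℝ)..s, h u with hg
  have hgderiv : ∀ s, HasDerivAt g (h s) s := by
    intro s
    exact intervalIntegral.integral_hasDerivAt_right (hhcont.intervalIntegrable _ _)
      hhcont.stronglyMeasurable.stronglyMeasurableAtFilter hhcont.continuousAt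
  have hgcont : Continuous g := by
    rw [continuous_iff_continuousAt]; exact fun s => (hgderiv s).continuousAt
  have hinner : ∀ s, (∫ u in (0:ℝ)..s, Real.exp (-((s - u) / c)) * b u)
      = Real.exp (-(s / c)) * g s := by
    intro s
    rw [hg, ← intervalIntegral.integral_const_mul]
    refine intervalIntegral.integral_congr fun u _ => ?_
    rw [hh, ← mul_assoc, ← Real.exp_add]
    congr 2
    field_simp
    ring
  have hEderiv : ∀ s, HasDerivAt (fun s => Real.exp (-(s / c))) (-c⁻¹ * Real.exp (-(s / c))) s := by
    intro s
    have h1 : HasDerivAt (fun s : ℝ => -(s / c)) (-c⁻¹) s := by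
      simpa [one_div] using ((hasDerivAt_id s).div_const c).fun_neg
    simpa [mul_comm] using h1.exp
  set F : ℝ → ℝ := fun s => -c * Real.exp (-(s / c)) * m₀ + ε⁻¹ * (Real.exp (-(s / c)) * g s)
    with hF
  have hFderiv : ∀ s, HasDerivAt F
      (Real.exp (-(s / c)) * m₀ + ε⁻¹ * b s - (ε ^ 3)⁻¹ * (Real.exp (-(s / c)) * g s)) s := by
    intro s
    have h1 : HasDerivAt (fun s => -c * Real.exp (-(s / c)) * m₀)
        (-c * (-c⁻¹ * Real.exp (-(s / c))) * m₀) s :=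
      (((hEderiv s).const_mul (-c)).mul_const m₀)
    have h2 : HasDerivAt (fun s => Real.exp (-(s / c)) * g s)
        (-c⁻¹ * Real.exp (-(s / c)) * g s + Real.exp (-(s / c)) * h s) s :=
      (hEderiv s).mul (hgderiv s)
    have h3 := h1.fun_add (h2.const_mul ε⁻¹)
    refine h3.congr_deriv ?_
    have hexp : Real.exp (-(s / c)) * h s = b s := by
      rw [hh, ← mul_assoc, ← Real.exp_add]
      simp
    have hε' : ε ≠ 0 := ne_of_gt hε
    rw [show ε⁻¹ * (-c⁻¹ * Real.exp (-(s / c)) * g s + Real.exp (-(s / c)) * h s)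
        = ε⁻¹ * (-c⁻¹ * Real.exp (-(s / c)) * g s) + ε⁻¹ * (Real.exp (-(s / c)) * h s) by ring,
      hexp]
    generalize Real.exp (-(s / c)) = E
    rw [hc]
    field_simp
    ring
  have hε' : ε ≠ 0 := ne_of_gt hε
  have hEc : Continuous fun s : ℝ => Real.exp (-(s / c)) :=
    Real.continuous_exp.comp (continuous_id.div_const c).neg
  have hmcont : Continuous (fun s => Real.exp (-(s / c)) * m₀ + ε⁻¹ * b s
      - (ε ^ 3)⁻¹ * (Real.exp (-(s / c)) * g s)) :=
    ((hEc.mul continuous_const).add (continuous_const.mul hb)).sub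
      (continuous_const.mul (hEc.mul hgcont))
  have key : (∫ s in (0:ℝ)..t, (Real.exp (-(s / c)) * m₀ + ε⁻¹ * b s
      - (ε ^ 3)⁻¹ * (Real.exp (-(s / c)) * g s))) = F t - F 0 :=
    intervalIntegral.integral_eq_sub_of_hasDerivAt (fun s _ => hFderiv s)
      (hmcont.intervalIntegrable _ _)
  have hcongr : (∫ s in (0:ℝ)..t,
        (Real.exp (-(s / ε ^ 2)) * m₀ + ε⁻¹ * b s
          - (ε ^ 3)⁻¹ * ∫ u in (0:ℝ)..s, Real.exp (-((s - u) / ε ^ 2)) * b u))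
      = ∫ s in (0:ℝ)..t, (Real.exp (-(s / c)) * m₀ + ε⁻¹ * b s
          - (ε ^ 3)⁻¹ * (Real.exp (-(s / c)) * g s)) := by
    refine intervalIntegral.integral_congr fun s _ => ?_
    rw [← hinner s, hc]
  rw [hcongr, key, hinner t, hc]
  have hF0 : F 0 = -c * m₀ := by
    simp [hF, hg]
  have hFt : F t = -c * Real.exp (-(t / c)) * m₀ + ε⁻¹ * (Real.exp (-(t / c)) * g t) := rfl
  rw [hF0, hFt, ← hc]
  generalize Real.exp (-(t / c)) = E
  rw [hc]
  field_simp
  ring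

lemma weight_integral {ε t : ℝ} (hε : 0 < ε) :
    ∫ u in (0:ℝ)..t, (ε^2)⁻¹ * Real.exp (-((t-u)/ε^2))
      = 1 - Real.exp (-(t/ε^2)) := by
  set c : ℝ := ε ^ 2 with hc
  have hc0 : 0 < c := by positivity
  have hderiv : ∀ u : ℝ, HasDerivAt (fun u => Real.exp (-((t-u)/c)))
      (c⁻¹ * Real.exp (-((t-u)/c))) u := by
    intro u
    have h1 : HasDerivAt (fun u : ℝ => -((t-u)/c)) c⁻¹ u := by
      have := (((hasDerivAt_id u).const_sub t).div_const c).fun_neg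
      refine this.congr_deriv ?_
      ring
    simpa [mul_comm] using h1.exp
  have hcont : Continuous fun u : ℝ => c⁻¹ * Real.exp (-((t-u)/c)) :=
    continuous_const.mul (Real.continuous_exp.comp
      (((continuous_const.sub continuous_id).div_const c).neg))
  have key := intervalIntegral.integral_eq_sub_of_hasDerivAt
    (f := fun u => Real.exp (-((t-u)/c))) (a := (0:ℝ)) (b := t)
    (fun u _ => hderiv u) (hcont.intervalIntegrable _ _)
  rw [key]
  simp

/-- Pathwise representation of the Ornstein--Uhlenbeck process
`m^ε(t) = e^{−t/ε²} m₀ + ε⁻¹ β(t) − ε⁻³ ∫₀ᵗ e^{−(t−s)/ε²} β(s) ds`. -/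
noncomputable def mOU {Ω : Type*} (β : ℝ → Ω → ℝ) (ε m0 t : ℝ) (ω : Ω) : ℝ :=
  Real.exp (-(t / ε ^ 2)) * m0 + ε⁻¹ * β t ω
    - (ε ^ 3)⁻¹ * ∫ s in (0:ℝ)..t, Real.exp (-((t - s) / ε ^ 2)) * β s ω

/-- `ζ^ε(t) = ε⁻¹ ∫₀ᵗ m^ε(s) ds`. -/
noncomputable def zetaOU {Ω : Type*} (β : ℝ → Ω → ℝ) (ε m0 t : ℝ) (ω : Ω) : ℝ :=
  ε⁻¹ * ∫ s in (0:ℝ)..t, mOU β ε m0 s ω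

/-- **Lemma (uniform exponential moment bounds for ζ^ε and β).** For every `T ∈ (0,∞)` and
`q ∈ (0,∞)`, `sup_{ε∈(0,ε₀)} sup_{0≤t≤T} 𝔼[e^{q|ζ^ε(t)|}] < ∞` and
`sup_{0≤t≤T} 𝔼[e^{q|β(t)|}] < ∞`. -/
theorem zeta_beta_exponential_moments
    {Ω : Type*} [MeasurableSpace Ω] (P : Measure Ω) [IsProbabilityMeasure P]
    (β : ℝ → Ω → ℝ)
    (hβmeas : ∀ t, Measurable (β t))
    (hβ0 : ∀ ω, β 0 ω = 0)
    (hβcont : ∀ᵐ ω ∂P, Continuous fun t => β t ω)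
    (hβgauss : ∀ s t : ℝ, 0 ≤ s → s ≤ t →
      Measure.map (fun ω => β t ω - β s ω) P = gaussianReal 0 (Real.toNNReal (t - s)))
    (hβindep : ∀ (n : ℕ) (u : ℕ → ℝ), Monotone u → 0 ≤ u 0 →
      iIndepFun
        (fun (i : Fin n) (ω : Ω) => β (u (i.1 + 1)) ω - β (u i.1) ω) P)
    (ε₀ : ℝ) (hε₀ : 0 < ε₀)
    (m0 : ℝ → ℝ) (M0 : ℝ) (hm0 : ∀ ε ∈ Ioo (0:ℝ) ε₀, |m0 ε| ≤ M0)
    (T : ℝ) (hT : 0 < T) (q : ℝ) (hq : 0 < q) :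
    (∃ M : ℝ, ∀ ε ∈ Ioo (0:ℝ) ε₀, ∀ t ∈ Icc (0:ℝ) T,
      ∫ ω, Real.exp (q * |zetaOU β ε (m0 ε) t ω|) ∂P ≤ M) ∧
    (∃ M : ℝ, ∀ t ∈ Icc (0:ℝ) T,
      ∫ ω, Real.exp (q * |β t ω|) ∂P ≤ M) := by
  classical
  have hM0 : 0 ≤ M0 :=
    le_trans (abs_nonneg _) (hm0 (ε₀/2) ⟨by positivity, half_lt_self hε₀⟩)
  have hqabs_cont : Continuous fun x : ℝ => Real.exp (q * |x|) :=
    Real.continuous_exp.comp (continuous_const.mul continuous_abs)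
  -- claim 2
  set C2 : ℝ := 2 * Real.exp (q^2 * T / 2) with hC2
  have claim2 : ∀ t ∈ Icc (0:ℝ) T,
      Integrable (fun ω => Real.exp (q * |β t ω|)) P ∧
      ∫ ω, Real.exp (q * |β t ω|) ∂P ≤ C2 := by
    intro t ht
    have hmap : Measure.map (β t) P = gaussianReal 0 (Real.toNNReal t) := by
      have h := hβgauss 0 t le_rfl ht.1
      have hfun : (fun ω => β t ω - β 0 ω) = β t := funext fun ω => by rw [hβ0 ω, sub_zero]
      rw [hfun, sub_zero] at h
      exact h
    have hgauss := gauss_exp_abs (Real.toNNReal t) hq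
    have hint : Integrable (fun ω => Real.exp (q * |β t ω|)) P := by
      have h1 : Integrable (fun x : ℝ => Real.exp (q * |x|)) (Measure.map (β t) P) := by
        rw [hmap]; exact hgauss.1
      exact (integrable_map_measure hqabs_cont.aestronglyMeasurable
        (hβmeas t).aemeasurable).mp h1
    refine ⟨hint, ?_⟩
    have hval : ∫ ω, Real.exp (q * |β t ω|) ∂P
        = ∫ x, Real.exp (q * |x|) ∂(gaussianReal 0 (Real.toNNReal t)) := by
      rw [← hmap, integral_map (hβmeas t).aemeasurable hqabs_cont.aestronglyMeasurable]
    rw [hval]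
    refine le_trans hgauss.2 ?_
    have hv : ((Real.toNNReal t : ℝ≥0) : ℝ) = t := Real.coe_toNNReal t ht.1
    rw [hC2]
    have : q^2 * ((Real.toNNReal t : ℝ≥0) : ℝ) / 2 ≤ q^2 * T / 2 := by
      rw [hv]; nlinarith [ht.2, sq_nonneg q]
    nlinarith [Real.exp_le_exp.mpr this, Real.exp_pos (q^2 * ((Real.toNNReal t : ℝ≥0) : ℝ)/2)]
  refine ⟨?_, ⟨C2, fun t ht => (claim2 t ht).2⟩⟩
  -- modified Brownian motion with all paths continuous
  obtain ⟨N, hNsub, hNmeas, hNnull⟩ :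
      ∃ N, {ω | ¬ Continuous fun t => β t ω} ⊆ N ∧ MeasurableSet N ∧ P N = 0 :=
    exists_measurable_superset_of_null hβcont
  set β' : ℝ → Ω → ℝ := fun t ω => if ω ∈ N then 0 else β t ω with hβ'
  have hβ'meas : ∀ t, Measurable (β' t) := by
    intro s
    simp only [hβ']
    exact Measurable.ite hNmeas measurable_const (hβmeas s)
  have hβ'eq : ∀ ω, ω ∉ N → ∀ s, β' s ω = β s ω := by
    intro ω hω s; simp only [hβ', if_neg hω]
  have hβ'cont : ∀ ω, Continuous fun s => β' s ω := by
    intro ω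
    by_cases hω : ω ∈ N
    · simp only [hβ', if_pos hω]; exact continuous_const
    · have : ω ∉ {ω | ¬ Continuous fun t => β t ω} := fun h => hω (hNsub h)
      simp only [mem_setOf_eq, not_not] at this
      simpa only [hβ', if_neg hω] using this
  have hae_notN : ∀ᵐ ω ∂P, ω ∉ N := by
    rw [ae_iff]
    simpa [not_not] using hNnull
  have hβ'ae : ∀ s, β' s =ᵐ[P] β s := by
    intro s
    filter_upwards [hae_notN] with ω hω
    exact hβ'eq ω hω s
  have hSM : StronglyMeasurable (Function.uncurry β') :=
    stronglyMeasurable_uncurry_of_continuous_of_stronglyMeasurable hβ'cont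
      (fun s => (hβ'meas s).stronglyMeasurable)
  set c₁ : ℝ := Real.exp (q * ε₀ * M0) with hc₁
  have hc₁1 : 1 ≤ c₁ := Real.one_le_exp (by positivity)
  have hC2pos : 0 < C2 := by rw [hC2]; positivity
  refine ⟨c₁ * C2, ?_⟩
  intro ε hε t ht
  rcases eq_or_lt_of_le ht.1 with h0 | h0
  · -- t = 0
    have hz : ∀ ω : Ω, zetaOU β ε (m0 ε) 0 ω = 0 := by
      intro ω; simp [zetaOU]
    rw [← h0]
    simp only [hz, abs_zero, mul_zero, Real.exp_zero]
    rw [integral_const]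
    simp only [probReal_univ, measure_univ, ENNReal.toReal_one, one_smul, smul_eq_mul]
    nlinarith [Real.exp_pos (q^2*T/2), Real.one_le_exp (by positivity : (0:ℝ) ≤ q^2*T/2)]
  · -- 0 < t
    have hεpos : 0 < ε := hε.1
    have hε2 : (0:ℝ) < ε^2 := by positivity
    set E : ℝ := Real.exp (-(t/ε^2)) with hE
    have hE1 : E < 1 := by
      rw [hE]
      exact Real.exp_lt_one_iff.mpr (neg_lt_zero.mpr (by positivity))
    have hE0 : 0 < E := Real.exp_pos _
    set Z : ℝ := 1 - E with hZ
    have hZpos : 0 < Z := by linarith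
    have hZ1 : Z ≤ 1 := by linarith
    set ρZ : ℝ → ℝ := fun u => Z⁻¹ * ((ε^2)⁻¹ * Real.exp (-((t-u)/ε^2))) with hρZ
    have hρZcont : Continuous ρZ := continuous_const.mul (continuous_const.mul
      (Real.continuous_exp.comp (((continuous_const.sub continuous_id).div_const _).neg)))
    have hρZnn : ∀ u, 0 ≤ ρZ u := fun u =>
      mul_nonneg (inv_nonneg.mpr hZpos.le) (mul_nonneg (inv_nonneg.mpr hε2.le) (Real.exp_pos _).le)
    set W : ℝ → ℝ≥0 := fun u => (ρZ u).toNNReal with hWd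
    have hWmeas : Measurable W := hρZcont.measurable.real_toNNReal
    set ν : Measure ℝ := (volume.restrict (Ioc 0 t)).withDensity (fun u => (W u : ℝ≥0∞)) with hν
    have hcoe : ∀ u, ((W u : ℝ)) = ρZ u := fun u => Real.coe_toNNReal _ (hρZnn u)
    have hρZIoc : IntegrableOn ρZ (Ioc 0 t) volume := hρZcont.integrableOn_Ioc
    have hρZint_eq : ∫ u in Ioc (0:ℝ) t, ρZ u = 1 := by
      have h1 : ∫ u in (0:ℝ)..t, ρZ u = 1 := by
        rw [hρZ]
        rw [intervalIntegral.integral_const_mul, weight_integral hεpos, ← hE, ← hZ]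
        exact inv_mul_cancel₀ hZpos.ne'
      rw [← intervalIntegral.integral_of_le h0.le, h1]
    haveI hνprob : IsProbabilityMeasure ν := by
      constructor
      rw [hν, withDensity_apply _ MeasurableSet.univ, Measure.restrict_univ]
      have h2 : ∫⁻ u, ((W u : ℝ≥0) : ℝ≥0∞) ∂(volume.restrict (Ioc 0 t))
          = ENNReal.ofReal (∫ u, ρZ u ∂(volume.restrict (Ioc 0 t))) := by
        rw [ofReal_integral_eq_lintegral_ofReal hρZIoc (ae_of_all _ hρZnn)]
        rfl
      rw [h2, hρZint_eq, ENNReal.ofReal_one]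
    have hν_ae : ∀ᵐ u ∂ν, u ∈ Ioc (0:ℝ) t :=
      (withDensity_absolutelyContinuous _ _).ae_le (ae_restrict_mem measurableSet_Ioc)
    have hνint : ∀ φ : ℝ → ℝ, Continuous φ → Integrable φ ν := by
      intro φ hφ
      obtain ⟨C, hC⟩ := (isCompact_Icc (a := (0:ℝ)) (b := t)).exists_bound_of_continuousOn
        hφ.continuousOn
      refine (integrable_const C).mono' hφ.aestronglyMeasurable ?_
      filter_upwards [hν_ae] with u hu
      exact hC u (Ioc_subset_Icc_self hu)
    have hνeval : ∀ φ : ℝ → ℝ, (∫ u, φ u ∂ν) = ∫ u in Ioc (0:ℝ) t, ρZ u * φ u := by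
      intro φ
      rw [hν, integral_withDensity_eq_integral_smul hWmeas]
      refine integral_congr_ae (ae_of_all _ fun u => ?_)
      show W u • φ u = ρZ u * φ u
      rw [NNReal.smul_def, smul_eq_mul, hcoe u]
    set G : Ω → ℝ := fun ω => ∫ u, Real.exp (q * |β' u ω|) ∂ν with hG
    have hΦ : StronglyMeasurable fun p : Ω × ℝ => Real.exp (q * |β' p.2 p.1|) := by
      have h1 : StronglyMeasurable fun p : Ω × ℝ => β' p.2 p.1 :=
        hSM.comp_measurable measurable_swap
      exact hqabs_cont.comp_stronglyMeasurable h1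
    have hGsm : StronglyMeasurable G := hΦ.integral_prod_right'
    have hGnn : ∀ ω, 0 ≤ G ω := fun ω => integral_nonneg fun u => (Real.exp_pos _).le
    have hGintν : ∀ ω, Integrable (fun u => Real.exp (q * |β' u ω|)) ν := fun ω =>
      hνint _ (hqabs_cont.comp (hβ'cont ω))
    -- pathwise bound
    have hkey : ∀ ω, ω ∉ N →
        Real.exp (q * |zetaOU β ε (m0 ε) t ω|) ≤ c₁ * G ω := by
      intro ω hω
      have hbc : Continuous fun u => β' u ω := hβ'cont ω
      have hζeq : zetaOU β ε (m0 ε) t ω = zetaOU β' ε (m0 ε) t ω := by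
        simp only [zetaOU, mOU, hβ'eq ω hω]
      have hζcf : zetaOU β' ε (m0 ε) t ω
          = ε * m0 ε * (1 - E) + (ε^2)⁻¹ * ∫ u in (0:ℝ)..t,
              Real.exp (-((t-u)/ε^2)) * β' u ω := by
        simp only [zetaOU, mOU]
        rw [hE]
        exact zeta_closed_form hεpos (m0 ε) hbc t
      have habs1 : |ε * m0 ε * (1 - E)| ≤ ε₀ * M0 := by
        rw [abs_mul, abs_mul, abs_of_pos hεpos, abs_of_pos hZpos]
        have h1 : |m0 ε| ≤ M0 := hm0 ε hε
        have h2 : ε * |m0 ε| ≤ ε₀ * M0 :=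
          mul_le_mul hε.2.le h1 (abs_nonneg _) hε₀.le
        calc ε * |m0 ε| * Z ≤ (ε₀ * M0) * 1 :=
              mul_le_mul h2 hZ1 hZpos.le (by positivity)
          _ = ε₀ * M0 := mul_one _
      have habs2 : |(ε^2)⁻¹ * ∫ u in (0:ℝ)..t, Real.exp (-((t-u)/ε^2)) * β' u ω|
          ≤ Z * ∫ u, |β' u ω| ∂ν := by
        rw [← intervalIntegral.integral_const_mul]
        refine le_trans (intervalIntegral.abs_integral_le_integral_abs h0.le) ?_
        have hcongr1 : (∫ u in (0:ℝ)..t, |(ε^2)⁻¹ * (Real.exp (-((t-u)/ε^2)) * β' u ω)|)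
            = ∫ u in (0:ℝ)..t, (ε^2)⁻¹ * Real.exp (-((t-u)/ε^2)) * |β' u ω| := by
          refine intervalIntegral.integral_congr fun u _ => ?_
          rw [abs_mul, abs_mul, abs_of_pos (inv_pos.mpr hε2), abs_of_pos (Real.exp_pos _)]
          ring
        rw [hcongr1, hνeval (fun u => |β' u ω|), ← integral_const_mul,
          intervalIntegral.integral_of_le h0.le]
        refine le_of_eq (integral_congr_ae (ae_of_all _ fun u => ?_))
        rw [hρZ]
        field_simp
      have hsum : q * |zetaOU β ε (m0 ε) t ω|
          ≤ q * (ε₀ * M0) + ∫ u, q * Z * |β' u ω| ∂ν := by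
        have h1 : |zetaOU β ε (m0 ε) t ω| ≤ ε₀ * M0 + Z * ∫ u, |β' u ω| ∂ν := by
          rw [hζeq, hζcf]
          exact le_trans (abs_add_le _ _) (add_le_add habs1 habs2)
        have h2 : ∫ u, q * Z * |β' u ω| ∂ν = q * Z * ∫ u, |β' u ω| ∂ν := by
          rw [← integral_const_mul]
        rw [h2]
        have h3 := mul_le_mul_of_nonneg_left h1 hq.le
        calc q * |zetaOU β ε (m0 ε) t ω|
            ≤ q * (ε₀ * M0 + Z * ∫ u, |β' u ω| ∂ν) := h3
          _ = q * (ε₀ * M0) + q * Z * ∫ u, |β' u ω| ∂ν := by ring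
      calc Real.exp (q * |zetaOU β ε (m0 ε) t ω|)
          ≤ Real.exp (q * (ε₀ * M0) + ∫ u, q * Z * |β' u ω| ∂ν) := Real.exp_le_exp.mpr hsum
        _ = c₁ * Real.exp (∫ u, q * Z * |β' u ω| ∂ν) := by
            rw [Real.exp_add, hc₁]
            congr 2
            ring
        _ ≤ c₁ * ∫ u, Real.exp (q * Z * |β' u ω|) ∂ν := by
            refine mul_le_mul_of_nonneg_left ?_ (Real.exp_pos _).le
            exact jensen_exp (hνint _ (continuous_const.mul (continuous_abs.comp hbc)))
              (hνint _ (Real.continuous_exp.comp (continuous_const.mul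
                (continuous_abs.comp hbc))))
        _ ≤ c₁ * G ω := by
            refine mul_le_mul_of_nonneg_left ?_ (Real.exp_pos _).le
            refine integral_mono (hνint _ (Real.continuous_exp.comp (continuous_const.mul
                (continuous_abs.comp hbc)))) (hGintν ω) fun u => ?_
            refine Real.exp_le_exp.mpr ?_
            have h4 := mul_le_mul_of_nonneg_right
              (mul_le_mul_of_nonneg_left hZ1 hq.le) (abs_nonneg (β' u ω))
            simpa using h4
    -- integrate the bound
    have hlin : ∫⁻ ω, ENNReal.ofReal (G ω) ∂P ≤ ENNReal.ofReal C2 := by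
      have hstep : ∀ ω, ENNReal.ofReal (G ω)
          = ∫⁻ u, ENNReal.ofReal (Real.exp (q * |β' u ω|)) ∂ν := fun ω =>
        ofReal_integral_eq_lintegral_ofReal (hGintν ω) (ae_of_all _ fun u => (Real.exp_pos _).le)
      calc ∫⁻ ω, ENNReal.ofReal (G ω) ∂P
          = ∫⁻ ω, ∫⁻ u, ENNReal.ofReal (Real.exp (q * |β' u ω|)) ∂ν ∂P :=
            lintegral_congr fun ω => hstep ω
        _ = ∫⁻ u, ∫⁻ ω, ENNReal.ofReal (Real.exp (q * |β' u ω|)) ∂P ∂ν :=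
            lintegral_lintegral_swap hΦ.measurable.ennreal_ofReal.aemeasurable
        _ ≤ ∫⁻ _, ENNReal.ofReal C2 ∂ν := by
            refine lintegral_mono_ae ?_
            filter_upwards [hν_ae] with u hu
            have huIcc : u ∈ Icc (0:ℝ) T := ⟨hu.1.le, hu.2.trans ht.2⟩
            have h1 : ∫⁻ ω, ENNReal.ofReal (Real.exp (q * |β' u ω|)) ∂P
                = ∫⁻ ω, ENNReal.ofReal (Real.exp (q * |β u ω|)) ∂P :=
              lintegral_congr_ae ((hβ'ae u).mono fun ω h => by simp only [h])
            rw [h1, ← ofReal_integral_eq_lintegral_ofReal (claim2 u huIcc).1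
              (ae_of_all _ fun ω => (Real.exp_pos _).le)]
            exact ENNReal.ofReal_le_ofReal (claim2 u huIcc).2
        _ = ENNReal.ofReal C2 := by rw [lintegral_const, measure_univ, mul_one]
    have hGint : Integrable G P := by
      refine ⟨hGsm.aestronglyMeasurable, ?_⟩
      rw [hasFiniteIntegral_iff_norm]
      have hnn : ∀ ω, ENNReal.ofReal ‖G ω‖ = ENNReal.ofReal (G ω) := fun ω => by
        rw [Real.norm_eq_abs, abs_of_nonneg (hGnn ω)]
      calc ∫⁻ ω, ENNReal.ofReal ‖G ω‖ ∂P = ∫⁻ ω, ENNReal.ofReal (G ω) ∂P :=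
            lintegral_congr hnn
        _ ≤ ENNReal.ofReal C2 := hlin
        _ < ⊤ := ENNReal.ofReal_lt_top
    have hGval : ∫ ω, G ω ∂P ≤ C2 := by
      rw [integral_eq_lintegral_of_nonneg_ae (ae_of_all _ hGnn) hGsm.aestronglyMeasurable]
      exact ENNReal.toReal_le_of_le_ofReal hC2pos.le hlin
    have hfinal1 : ∀ᵐ ω ∂P, Real.exp (q * |zetaOU β ε (m0 ε) t ω|) ≤ c₁ * G ω := by
      filter_upwards [hae_notN] with ω hω
      exact hkey ω hω
    calc ∫ ω, Real.exp (q * |zetaOU β ε (m0 ε) t ω|) ∂P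
        ≤ ∫ ω, c₁ * G ω ∂P :=
          integral_mono_of_nonneg (ae_of_all _ fun ω => (Real.exp_pos _).le)
            (hGint.const_mul c₁) hfinal1
      _ = c₁ * ∫ ω, G ω ∂P := integral_const_mul _ _
      _ ≤ c₁ * C2 := mul_le_mul_of_nonneg_left hGval (Real.exp_pos _).le
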